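/- With C, t, T, index_T as above: index_T(c ⊕ c') = index_T(c) + index_T(c') for all c, c' ∈ C. -/

import Mathlib

open CategoryTheory Category Limits Pretriangulated Opposite

universe v u

section Defs

variable {C : Type u} [Category.{v} C]

section Add

variable [Preadditive C] [HasFiniteBiproducts C]

/-- `x` lies in `add t`: it is a direct summand of a finite direct sum of copies of `t`. -/
def inAdd (t x : C) : Prop :=
  ∃ (n : ℕ) (i : x ⟶ ⨁ (fun _ : Fin n => t)) (r : ⨁ (fun _ : Fin n => t) ⟶ x),
    i ≫ r = 𝟙 x

end Add

/-- A morphism lies in the radical of the category. -/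
def radMor [Preadditive C] {x y : C} (f : x ⟶ y) : Prop :=
  ∀ g : y ⟶ x, IsIso (𝟙 x - f ≫ g)

/-- An object is indecomposable. -/
def IndecObj [Preadditive C] [HasBinaryBiproducts C] (s : C) : Prop :=
  ¬ IsZero s ∧ ∀ (a b : C), (s ≅ a ⊞ b) → IsZero a ∨ IsZero b

/-- Every object has a precover by an object of `Tset` (contravariant finiteness). -/
def IsPrecovering (Tset : Set C) : Prop :=
  ∀ c : C, ∃ (x : C) (f : x ⟶ c), x ∈ Tset ∧
    ∀ x' ∈ Tset, ∀ g : x' ⟶ c, ∃ h : x' ⟶ x, h ≫ f = g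

/-- Every object has a preenvelope by an object of `Tset` (covariant finiteness). -/
def IsPreenveloping (Tset : Set C) : Prop :=
  ∀ c : C, ∃ (x : C) (f : c ⟶ x), x ∈ Tset ∧
    ∀ x' ∈ Tset, ∀ g : c ⟶ x', ∃ h : x ⟶ x', f ≫ h = g

/-- `f : x ⟶ c` is a `Tset`-cover: a right minimal `Tset`-approximation. -/
def IsTCover (Tset : Set C) {x c : C} (f : x ⟶ c) : Prop :=
  x ∈ Tset ∧ (∀ x' ∈ Tset, ∀ g : x' ⟶ c, ∃ h : x' ⟶ x, h ≫ f = g) ∧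
    ∀ φ : x ⟶ x, φ ≫ f = f → IsIso φ

section Shift

variable [Preadditive C] [HasShift C ℤ]

/-- `Tset` is an `n`-cluster tilting subcategory: it is functorially finite and coincides with
both `Ext^{1..n-1}`-orthogonals of itself. -/
structure IsClusterTiltingSub (n : ℕ) (Tset : Set C) : Prop where
  precovering : IsPrecovering Tset
  preenveloping : IsPreenveloping Tset
  mem_iff_ext₁ : ∀ c : C, c ∈ Tset ↔
    ∀ i : ℕ, 1 ≤ i → i ≤ n - 1 → ∀ x ∈ Tset, ∀ f : x ⟶ c⟦(i : ℤ)⟧, f = 0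
  mem_iff_ext₂ : ∀ c : C, c ∈ Tset ↔
    ∀ i : ℕ, 1 ≤ i → i ≤ n - 1 → ∀ x ∈ Tset, ∀ f : c ⟶ x⟦(i : ℤ)⟧, f = 0

/-- `t` is an `n`-cluster tilting object: `add t` is an `n`-cluster tilting subcategory. -/
def IsClusterTiltingObj [HasFiniteBiproducts C] (n : ℕ) (t : C) : Prop :=
  IsClusterTiltingSub n {x : C | inAdd t x}

end Shift

section Tri

variable [Preadditive C] [HasZeroObject C] [HasShift C ℤ]
  [∀ n : ℤ, (shiftFunctor C n).Additive] [Pretriangulated C]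

/-- The Iyama–Yoshino star operation `X * Y` on full subcategories. -/
def star (X Y : Set C) : Set C :=
  {c | ∃ (x y : C) (f : x ⟶ c) (g : c ⟶ y) (h : y ⟶ x⟦(1 : ℤ)⟧),
    Triangle.mk f g h ∈ (distTriang C) ∧ x ∈ X ∧ y ∈ Y}

/-- Iterated star operation `X₁ * X₂ * ⋯ * Xₘ`. -/
def starList : List (Set C) → Set C
  | [] => {c | IsZero c}
  | [X] => X
  | X :: Y :: L => star X (starList (Y :: L))

/-- A tower of triangles connecting the objects `cobj (m+1), cobj m, …, cobj 1, cobj 0`: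
triangles `w (i+1) ⟶ cobj (i+1) ⟶ w i ⟶ (w (i+1))⟦1⟧` for `i < m`, with
`w 0 = cobj 0` and `w m = cobj (m+1)`. -/
structure TriTower (m : ℕ) (cobj : ℕ → C) where
  w : ℕ → C
  fmor : ∀ i : ℕ, w (i + 1) ⟶ cobj (i + 1)
  gmor : ∀ i : ℕ, cobj (i + 1) ⟶ w i
  hmor : ∀ i : ℕ, w i ⟶ (w (i + 1))⟦(1 : ℤ)⟧
  mem : ∀ i < m, Triangle.mk (fmor i) (gmor i) (hmor i) ∈ distTriang C
  w_zero : w 0 = cobj 0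
  w_top : w m = cobj (m + 1)

/-- The composite `w 0 ⟶ Σʲ (w j)` of the (suitably shifted) wavy morphisms of a tower. -/
noncomputable def towerComp {m : ℕ} {cobj : ℕ → C} (tw : TriTower m cobj) :
    ∀ j : ℕ, (tw.w 0 ⟶ (tw.w j)⟦(j : ℤ)⟧)
  | 0 => (shiftFunctorZero' C ((0 : ℕ) : ℤ) (by simp)).inv.app (tw.w 0)
  | (j + 1) => towerComp tw j ≫ (shiftFunctor C (j : ℤ)).map (tw.hmor j) ≫
      (shiftFunctorAdd' C (1 : ℤ) (j : ℤ) ((j + 1 : ℕ) : ℤ) (by push_cast; ring)).inv.app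
        (tw.w (j + 1))

/-- The full composite `cobj 0 ⟶ Σᵐ (cobj (m+1))` of the wavy morphisms of a tower. -/
noncomputable def towerGamma {m : ℕ} {cobj : ℕ → C} (tw : TriTower m cobj) :
    cobj 0 ⟶ (cobj (m + 1))⟦(m : ℤ)⟧ :=
  eqToHom tw.w_zero.symm ≫ towerComp tw m ≫ eqToHom (by rw [tw.w_top])

/-- `cls` is constant on isomorphism classes of objects of `Tset` and additive on biproducts
of objects of `Tset`; quantifying over all such `cls` encodes identities in the split
Grothendieck group `K₀^{sp}(Tset)`. -/
def IsAddOn [HasFiniteBiproducts C] (Tset : Set C) {G : Type*} [AddCommGroup G]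
    (cls : C → G) : Prop :=
  (∀ x y : C, x ∈ Tset → y ∈ Tset → Nonempty (x ≅ y) → cls x = cls y) ∧
  (∀ x y : C, x ∈ Tset → y ∈ Tset → cls (x ⊞ y) = cls x + cls y)

/-- `ind` is the triangulated index with respect to `Tset`: for each `c` there is a tower of
triangles built from `Tset`-covers, and `ind c` is the alternating sum of the classes of its
`Tset`-objects. -/
def IsIndex [HasFiniteBiproducts C] (n : ℕ) (Tset : Set C) {G : Type*} [AddCommGroup G]
    (cls ind : C → G) : Prop :=
  ∀ c : C, ∃ (cobj : ℕ → C) (tw : TriTower (n - 1) cobj),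
    cobj 0 = c ∧ (∀ i < n - 1, IsTCover Tset (tw.gmor i)) ∧ cobj n ∈ Tset ∧
    ind c = ∑ i ∈ Finset.range n, ((-1 : ℤ) ^ i) • cls (cobj (i + 1))

/-- `ind` is the `(d+2)`-angulated index with respect to `Tset`: for each `s ∈ Sset` there is a
`(d+2)`-angle (encoded as a tower of triangles) `t_d → ⋯ → t_0 → s → Σ^d t_d` with `t_i ∈ Tset`
and radical maps, and `ind s` is the alternating sum of the classes of the `t_i`. -/
def IsHigherIndex [HasFiniteBiproducts C] (d : ℕ) (Tset Sset : Set C) {G : Type*}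
    [AddCommGroup G] (cls ind : C → G) : Prop :=
  ∀ s ∈ Sset, ∃ (cobj : ℕ → C) (tw : TriTower d cobj),
    cobj 0 = s ∧ (∀ i, 1 ≤ i → i ≤ d + 1 → cobj i ∈ Tset) ∧
    (∀ j : ℕ, j + 2 ≤ d → radMor (tw.gmor (j + 1) ≫ tw.fmor j)) ∧
    (∀ j : ℕ, (hj : j + 1 = d) →
      radMor ((eqToHom (show cobj (d + 1) = tw.w (j + 1) by rw [hj, tw.w_top]) :
        cobj (d + 1) ⟶ tw.w (j + 1)) ≫ tw.fmor j)) ∧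
    ind s = ∑ i ∈ Finset.range (d + 1), ((-1 : ℤ) ^ i) • cls (cobj (i + 1))

/-- `t` is an Oppermann–Thomas cluster tilting object of the `(d+2)`-angulated category `Sset`:
`Hom(t, Σ^d t) = 0`, and every `s ∈ Sset` admits a `(d+2)`-angle (encoded as a tower)
`t_d → ⋯ → t_0 → s → Σ^d t_d` with all `t_i ∈ add t`. -/
def IsOTClusterTilting [HasFiniteBiproducts C] (d : ℕ) (Sset : Set C) (t : C) : Prop :=
  t ∈ Sset ∧ (∀ f : t ⟶ t⟦(d : ℤ)⟧, f = 0) ∧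
    ∀ s ∈ Sset, ∃ (cobj : ℕ → C) (tw : TriTower d cobj),
      cobj 0 = s ∧ ∀ i, 1 ≤ i → i ≤ d + 1 → inAdd t (cobj i)

/-- A `N`-Calabi–Yau structure on `Sset`: a bifunctorial perfect pairing
`Hom(x,y) × Hom(y, x⟦N⟧) → k`, encoding natural isomorphisms `Hom(x,y) ≅ D Hom(y, x⟦N⟧)`. -/
structure CYData (k : Type*) [Field k] [Linear k C] (Sset : Set C) (N : ℤ) where
  pair : ∀ x y : C, (x ⟶ y) → (y ⟶ x⟦N⟧) → k
  add_left : ∀ x y, x ∈ Sset → y ∈ Sset → ∀ (f f' : x ⟶ y) (g : y ⟶ x⟦N⟧),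
    pair x y (f + f') g = pair x y f g + pair x y f' g
  add_right : ∀ x y, x ∈ Sset → y ∈ Sset → ∀ (f : x ⟶ y) (g g' : y ⟶ x⟦N⟧),
    pair x y f (g + g') = pair x y f g + pair x y f g'
  smul_left : ∀ x y, x ∈ Sset → y ∈ Sset → ∀ (a : k) (f : x ⟶ y) (g : y ⟶ x⟦N⟧),
    pair x y (a • f) g = a * pair x y f g
  smul_right : ∀ x y, x ∈ Sset → y ∈ Sset → ∀ (a : k) (f : x ⟶ y) (g : y ⟶ x⟦N⟧),
    pair x y f (a • g) = a * pair x y f g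
  assoc : ∀ x y z, x ∈ Sset → y ∈ Sset → z ∈ Sset →
    ∀ (f : x ⟶ y) (g : y ⟶ z) (h : z ⟶ x⟦N⟧),
    pair x z (f ≫ g) h = pair x y f (g ≫ h)
  nondeg_left : ∀ x y, x ∈ Sset → y ∈ Sset → ∀ f : x ⟶ y,
    (∀ g : y ⟶ x⟦N⟧, pair x y f g = 0) → f = 0
  nondeg_right : ∀ x y, x ∈ Sset → y ∈ Sset → ∀ g : y ⟶ x⟦N⟧,
    (∀ f : x ⟶ y, pair x y f g = 0) → g = 0

end Tri

end Defs



section MyAux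

open ZeroObject

attribute [local instance] hasBinaryBiproducts_of_finite_biproducts
set_option linter.unusedSectionVars false

section MyAdd
variable {C : Type u} [Category.{v} C] [Preadditive C] [HasFiniteBiproducts C]

variable {t : C}

lemma inAdd_self : inAdd t t :=
  ⟨1, biproduct.lift (fun _ => 𝟙 t), biproduct.π _ 0, by simp⟩

lemma inAdd_of_isZero {x : C} (hx : IsZero x) : inAdd t x :=
  ⟨0, 0, 0, by apply hx.eq_of_src⟩

lemma inAdd_of_iso {x y : C} (e : x ≅ y) (hy : inAdd t y) : inAdd t x := by
  obtain ⟨n, i, r, hir⟩ := hy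
  refine ⟨n, e.hom ≫ i, r ≫ e.inv, ?_⟩
  rw [assoc, reassoc_of% hir]
  simp

lemma inAdd_biprod {x y : C} (hx : inAdd t x) (hy : inAdd t y) : inAdd t (x ⊞ y) := by
  obtain ⟨n, i, r, hir⟩ := hx
  obtain ⟨m, j, s, hjs⟩ := hy
  refine ⟨n + m,
    biprod.desc (i ≫ biproduct.lift (fun k : Fin (n+m) =>
      if h : (k : ℕ) < n then biproduct.π _ (⟨k, h⟩ : Fin n) else 0))
      (j ≫ biproduct.lift (fun k : Fin (n+m) =>
      if h : (k : ℕ) < n then 0 else biproduct.π _ (⟨(k : ℕ) - n, by omega⟩ : Fin m))),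
    biprod.lift (biproduct.lift (fun l : Fin n => biproduct.π _ (⟨l, by omega⟩ : Fin (n+m))) ≫ r)
      (biproduct.lift (fun l : Fin m => biproduct.π _ (⟨n + l, by omega⟩ : Fin (n+m))) ≫ s), ?_⟩
  apply biprod.hom_ext' <;> apply biprod.hom_ext <;>
    simp only [biprod.inl_desc_assoc, biprod.inr_desc_assoc, assoc, biprod.lift_fst,
      biprod.lift_snd, biprod.inl_fst, biprod.inl_snd, biprod.inr_fst, biprod.inr_snd, comp_id]
  · have : (biproduct.lift (fun k : Fin (n+m) =>
        if h : (k : ℕ) < n then biproduct.π (fun _ : Fin n => t) (⟨k, h⟩ : Fin n) else 0) ≫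
        biproduct.lift (fun l : Fin n => biproduct.π (fun _ : Fin (n+m) => t)
          (⟨l, by omega⟩ : Fin (n+m)))) = 𝟙 _ := by
      apply biproduct.hom_ext
      intro l
      simp [Fin.eta]
    rw [reassoc_of% this, hir]
  · have : (biproduct.lift (fun k : Fin (n+m) =>
        if h : (k : ℕ) < n then biproduct.π (fun _ : Fin n => t) (⟨k, h⟩ : Fin n) else 0) ≫
        biproduct.lift (fun l : Fin m => biproduct.π (fun _ : Fin (n+m) => t)
          (⟨n + l, by omega⟩ : Fin (n+m)))) = 0 := by
      apply biproduct.hom_ext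
      intro l
      simp only [assoc, biproduct.lift_π, zero_comp]
      rw [dif_neg (by omega)]
    rw [reassoc_of% this]
    simp
  · have : (biproduct.lift (fun k : Fin (n+m) =>
        if h : (k : ℕ) < n then 0 else biproduct.π (fun _ : Fin m => t)
          (⟨(k : ℕ) - n, by omega⟩ : Fin m)) ≫
        biproduct.lift (fun l : Fin n => biproduct.π (fun _ : Fin (n+m) => t)
          (⟨l, by omega⟩ : Fin (n+m)))) = 0 := by
      apply biproduct.hom_ext
      intro l
      simp only [assoc, biproduct.lift_π, zero_comp]
      rw [dif_pos (by omega)]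
    rw [reassoc_of% this]
    simp
  · have : (biproduct.lift (fun k : Fin (n+m) =>
        if h : (k : ℕ) < n then 0 else biproduct.π (fun _ : Fin m => t)
          (⟨(k : ℕ) - n, by omega⟩ : Fin m)) ≫
        biproduct.lift (fun l : Fin m => biproduct.π (fun _ : Fin (n+m) => t)
          (⟨n + l, by omega⟩ : Fin (n+m)))) = 𝟙 _ := by
      apply biproduct.hom_ext
      intro l
      simp only [assoc, biproduct.lift_π, id_comp]
      rw [dif_neg (by omega)]
      congr 1
      exact Fin.ext (by simp)
    rw [reassoc_of% this, hjs]

end MyAdd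

section MyTri
variable {C : Type u} [Category.{v} C] [Preadditive C] [HasZeroObject C] [HasShift C ℤ]
  [∀ n : ℤ, (shiftFunctor C n).Additive] [Pretriangulated C] [HasFiniteBiproducts C]

/-- Binary biproduct vs product over Bool. -/
noncomputable def biprodPiBoolIso (f : Bool → C) : (f true ⊞ f false) ≅ ∏ᶜ f where
  hom := Pi.lift (fun b => Bool.rec biprod.snd biprod.fst b)
  inv := biprod.lift (Pi.π f true) (Pi.π f false)
  hom_inv_id := by apply biprod.hom_ext <;> simp
  inv_hom_id := by
    apply limit.hom_ext
    rintro ⟨(_|_)⟩ <;> simp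

noncomputable def biprodPiBoolTriIso (T : Bool → Triangle C) :
    (⟨(T true).obj₁ ⊞ (T false).obj₁, (T true).obj₂ ⊞ (T false).obj₂,
      (T true).obj₃ ⊞ (T false).obj₃,
      biprod.map (T true).mor₁ (T false).mor₁, biprod.map (T true).mor₂ (T false).mor₂,
      biprod.desc ((T true).mor₃ ≫ (shiftFunctor C (1:ℤ)).map biprod.inl)
        ((T false).mor₃ ≫ (shiftFunctor C (1:ℤ)).map biprod.inr)⟩ : Triangle C) ≅
    ⟨∏ᶜ (fun b => (T b).obj₁), ∏ᶜ (fun b => (T b).obj₂), ∏ᶜ (fun b => (T b).obj₃),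
      Limits.Pi.map (fun j => (T j).mor₁), Limits.Pi.map (fun j => (T j).mor₂),
      Limits.Pi.map (fun j => (T j).mor₃) ≫
        inv (piComparison (shiftFunctor C (1:ℤ)) (fun b => (T b).obj₁))⟩ := by
  refine Triangle.isoMk _ _ (biprodPiBoolIso (fun b => (T b).obj₁))
    (biprodPiBoolIso (fun b => (T b).obj₂)) (biprodPiBoolIso (fun b => (T b).obj₃)) ?_ ?_ ?_
  · apply limit.hom_ext
    rintro ⟨(_|_)⟩ <;> simp [biprodPiBoolIso]
  · apply limit.hom_ext
    rintro ⟨(_|_)⟩ <;> simp [biprodPiBoolIso]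
  · rw [← cancel_mono (piComparison (shiftFunctor C (1:ℤ)) (fun b => (T b).obj₁))]
    apply limit.hom_ext
    rintro ⟨(_|_)⟩ <;>
      · apply biprod.hom_ext' <;>
          simp [biprodPiBoolIso, ← Functor.map_comp]

lemma biprodTriangle_distinguished {w x z w' x' z' : C}
    (a : w ⟶ x) (f : x ⟶ z) (h : z ⟶ w⟦(1:ℤ)⟧)
    (hT : Triangle.mk a f h ∈ distTriang C)
    (a' : w' ⟶ x') (f' : x' ⟶ z') (h' : z' ⟶ w'⟦(1:ℤ)⟧)
    (hT' : Triangle.mk a' f' h' ∈ distTriang C) :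
    Triangle.mk (biprod.map a a') (biprod.map f f')
      (biprod.desc (h ≫ (shiftFunctor C (1:ℤ)).map biprod.inl)
        (h' ≫ (shiftFunctor C (1:ℤ)).map biprod.inr)) ∈ distTriang C := by
  let T : Bool → Triangle C := fun b => bif b then Triangle.mk a f h else Triangle.mk a' f' h'
  have hprod := productTriangle_distinguished T (by rintro (_|_); exacts [hT', hT])
  exact isomorphic_distinguished _ hprod _ (biprodPiBoolTriIso T)

set_option linter.unusedSectionVars false

/-- Cones over isomorphic bases of distinguished triangles are isomorphic. -/
lemma coneIso (T T' : Triangle C) (hT : T ∈ distTriang C) (hT' : T' ∈ distTriang C)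
    (φ₂ : T.obj₂ ≅ T'.obj₂) (φ₃ : T.obj₃ ≅ T'.obj₃)
    (comm : T.mor₂ ≫ φ₃.hom = φ₂.hom ≫ T'.mor₂) : Nonempty (T.obj₁ ≅ T'.obj₁) := by
  obtain ⟨a, ha₁, ha₂⟩ :=
    complete_distinguished_triangle_morphism₁ T T' hT hT' φ₂.hom φ₃.hom comm
  let φ : T ⟶ T' := ⟨a, φ₂.hom, φ₃.hom, ha₁, comm, ha₂⟩
  have h2 : IsIso φ.hom₂ := by dsimp [φ]; infer_instance
  have h3 : IsIso φ.hom₃ := by dsimp [φ]; infer_instance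
  have := isIso₁_of_isIso₂₃ φ hT hT' h2 h3
  exact ⟨asIso φ.hom₁⟩

lemma coneOfDesc {w x y z z' : C} (f : x ⟶ z) (g : y ⟶ z)
    (a : w ⟶ x) (h : z ⟶ w⟦(1:ℤ)⟧) (hT : Triangle.mk a f h ∈ distTriang C)
    (p : y ⟶ x) (hp : p ≫ f = g)
    (e₁ : z' ⟶ x ⊞ y) (e₃ : z ⟶ z'⟦(1:ℤ)⟧)
    (hE : Triangle.mk e₁ (biprod.desc f g) e₃ ∈ distTriang C) :
    Nonempty (w ⊞ y ≅ z') := by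
  have hbi := biprodTriangle_distinguished a f h hT (𝟙 y) (0 : y ⟶ (0:C)) 0
    (contractible_distinguished y)
  set u : x ⊞ y ⟶ x ⊞ y := 𝟙 _ + biprod.snd ≫ p ≫ biprod.inl with hu
  have hsq : (biprod.snd ≫ p ≫ biprod.inl : x ⊞ y ⟶ x ⊞ y) ≫
      (biprod.snd ≫ p ≫ biprod.inl : x ⊞ y ⟶ x ⊞ y) = 0 := by simp
  have huiso : IsIso u := by
    refine ⟨𝟙 _ - biprod.snd ≫ p ≫ biprod.inl, ?_, ?_⟩ <;>
      · rw [hu]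
        simp only [Preadditive.add_comp, Preadditive.comp_add, Preadditive.sub_comp,
          Preadditive.comp_sub, id_comp, comp_id, hsq]
        abel
  -- iso z ⊞ 0 ≅ z
  have hz0 : IsZero (0 : C) := isZero_zero C
  let ζ : (z ⊞ (0:C)) ≅ z :=
    { hom := biprod.fst, inv := biprod.inl,
      hom_inv_id := by
        apply biprod.hom_ext' <;> [skip; apply hz0.eq_of_src] <;> simp
      inv_hom_id := by simp }
  have comm : (Triangle.mk (biprod.map a (𝟙 y)) (biprod.map f (0 : y ⟶ (0:C)))
      (biprod.desc (h ≫ (shiftFunctor C (1:ℤ)).map biprod.inl)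
        ((0 : (0:C) ⟶ y⟦(1:ℤ)⟧) ≫ (shiftFunctor C (1:ℤ)).map biprod.inr))).mor₂ ≫ ζ.hom =
      ((asIso u).symm).hom ≫ (Triangle.mk e₁ (biprod.desc f g) e₃).mor₂ := by
    dsimp
    unfold Triangle.mk
    rw [IsIso.eq_inv_comp]
    apply biprod.hom_ext' <;> simp [ζ, hu, hp]
  obtain ⟨i⟩ := coneIso _ _ hbi hE ((asIso u).symm) ζ comm
  exact ⟨i⟩

lemma schanuel {w x v y z : C} (f : x ⟶ z) (g : y ⟶ z)
    (a : w ⟶ x) (h : z ⟶ w⟦(1:ℤ)⟧) (hT : Triangle.mk a f h ∈ distTriang C)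
    (a' : v ⟶ y) (h' : z ⟶ v⟦(1:ℤ)⟧) (hU : Triangle.mk a' g h' ∈ distTriang C)
    (p : y ⟶ x) (hp : p ≫ f = g) (q : x ⟶ y) (hq : q ≫ g = f) :
    Nonempty (w ⊞ y ≅ v ⊞ x) := by
  obtain ⟨z', e₁, e₃, hE⟩ := distinguished_cocone_triangle₁ (biprod.desc f g : x ⊞ y ⟶ z)
  obtain ⟨i₁⟩ := coneOfDesc f g a h hT p hp e₁ e₃ hE
  have hswap : ((biprod.braiding y x).hom ≫ biprod.desc f g : y ⊞ x ⟶ z) = biprod.desc g f := by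
    apply biprod.hom_ext' <;> simp
  have hE₂ : Triangle.mk (e₁ ≫ (biprod.braiding x y).hom) (biprod.desc g f) e₃ ∈
      distTriang C := by
    refine isomorphic_distinguished _ hE _ ?_
    refine Triangle.isoMk _ _ (Iso.refl _) (biprod.braiding x y).symm (Iso.refl _)
      (by simp [Triangle.mk]) (by apply biprod.hom_ext' <;> simp [Triangle.mk]) (by simp [Triangle.mk])
  obtain ⟨i₂⟩ := coneOfDesc g f a' h' hU q hq (e₁ ≫ (biprod.braiding x y).hom) e₃ hE₂
  exact ⟨i₁ ≪≫ i₂.symm⟩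



section Towers

variable {t : C}

/-- Index function for the truncated tower. -/
def truncCobj (W : C) (cobj : ℕ → C) : ℕ → C :=
  fun j => match j with | 0 => W | j+1 => cobj (j+2)

@[simp] lemma truncCobj_succ (W : C) (cobj : ℕ → C) (i : ℕ) :
    truncCobj W cobj (i+1) = cobj (i+1+1) := rfl

/-- Index function for the trivial tower. -/
noncomputable def trivCobj (s : C) : ℕ → C :=
  fun j => match j with | 0 => s | 1 => s | _+2 => (0 : C)

@[simp] lemma trivCobj_one (s : C) : trivCobj s 1 = s := rfl
@[simp] lemma trivCobj_succ_succ (s : C) (j : ℕ) : trivCobj s (j+2) = (0 : C) := rfl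

noncomputable def trivW (s : C) : ℕ → C :=
  fun i => match i with | 0 => s | _+1 => (0 : C)

/-- Truncation of a tower. -/
def TriTower.trunc {L : ℕ} {cobj : ℕ → C} (tw : TriTower (L+1) cobj) :
    TriTower (C := C) L (truncCobj (tw.w 1) cobj) where
  w := fun i => tw.w (i+1)
  fmor := fun i => tw.fmor (i+1)
  gmor := fun i => tw.gmor (i+1)
  hmor := fun i => tw.hmor (i+1)
  mem := fun i hi => tw.mem (i+1) (by omega)
  w_zero := rfl
  w_top := tw.w_top

/-- The trivial tower on an object. -/
noncomputable def trivTower (L : ℕ) (s : C) :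
    TriTower (C := C) L (trivCobj s) where
  w := trivW s
  fmor := fun i => 0
  gmor := fun i => match i with | 0 => 𝟙 s | _+1 => 0
  hmor := fun i => 0
  mem := fun i _ => by
    match i with
    | 0 => exact contractible_distinguished₁ s
    | j+1 =>
        refine isomorphic_distinguished _ (contractible_distinguished (0 : C)) _ ?_
        exact Triangle.isoMk _ _ (Iso.refl _) (Iso.refl _) (Iso.refl _)
          (by exact (isZero_zero C).eq_of_src _ _) (by exact (isZero_zero C).eq_of_src _ _)
            (by exact (isZero_zero C).eq_of_src _ _)
  w_zero := rfl
  w_top := by match L with | 0 => rfl | _+1 => rfl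

/-- Direct sum of towers. -/
noncomputable def TriTower.dsum {L : ℕ} {ca cb : ℕ → C}
    (A : TriTower L ca) (B : TriTower L cb) :
    TriTower (C := C) L (fun j => ca j ⊞ cb j) where
  w := fun i => A.w i ⊞ B.w i
  fmor := fun i => biprod.map (A.fmor i) (B.fmor i)
  gmor := fun i => biprod.map (A.gmor i) (B.gmor i)
  hmor := fun i => biprod.desc (A.hmor i ≫ (shiftFunctor C (1:ℤ)).map biprod.inl)
    (B.hmor i ≫ (shiftFunctor C (1:ℤ)).map biprod.inr)
  mem := fun i hi => biprodTriangle_distinguished _ _ _ (A.mem i hi) _ _ _ (B.mem i hi)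
  w_zero := by rw [A.w_zero, B.w_zero]
  w_top := by rw [A.w_top, B.w_top]


lemma trivTower_precover (L : ℕ) (s : C) :
    ∀ i, ∀ x : C, ∀ g : x ⟶ (trivTower (C := C) L s).w i,
      ∃ h : x ⟶ trivCobj s (i+1),
        h ≫ (trivTower L s).gmor i = g := by
  intro i x g
  match i with
  | 0 => exact ⟨g, comp_id g⟩
  | i+1 => exact ⟨0, (isZero_zero C).eq_of_tgt _ _⟩

lemma dsum_precover {L : ℕ} {ca cb : ℕ → C} (A : TriTower L ca) (B : TriTower L cb)
    (pa : ∀ i < L, ∀ x : C, inAdd t x → ∀ g : x ⟶ A.w i, ∃ h : x ⟶ ca (i+1), h ≫ A.gmor i = g)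
    (pb : ∀ i < L, ∀ x : C, inAdd t x → ∀ g : x ⟶ B.w i, ∃ h : x ⟶ cb (i+1), h ≫ B.gmor i = g) :
    ∀ i < L, ∀ x : C, inAdd t x → ∀ g : x ⟶ (A.dsum B).w i,
      ∃ h : x ⟶ ca (i+1) ⊞ cb (i+1), h ≫ (A.dsum B).gmor i = g := by
  intro i hi x hx g
  obtain ⟨h₁, hh₁⟩ := pa i hi x hx (g ≫ biprod.fst)
  obtain ⟨h₂, hh₂⟩ := pb i hi x hx (g ≫ biprod.snd)
  exact ⟨biprod.lift h₁ h₂, by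
    apply biprod.hom_ext <;> simp [TriTower.dsum, hh₁, hh₂]⟩

lemma cls_zero {G : Type*} [AddCommGroup G] {cls : C → G}
    (hcls : IsAddOn {x : C | inAdd t x} cls) : cls 0 = 0 := by
  have h0 : inAdd t (0 : C) := inAdd_of_isZero (isZero_zero C)
  have hb : IsZero ((0 : C) ⊞ 0) := by
    rw [IsZero.iff_id_eq_zero]
    apply biprod.hom_ext <;> apply (isZero_zero C).eq_of_tgt
  have h1 := hcls.1 ((0 : C) ⊞ 0) 0 (inAdd_of_isZero hb) h0 ⟨hb.iso (isZero_zero C)⟩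
  have h2 := hcls.2 0 0 h0 h0
  exact left_eq_add.mp (h1.symm.trans h2)

lemma key_invariance {G : Type*} [AddCommGroup G] (cls : C → G)
    (hcls : IsAddOn {x : C | inAdd t x} cls) (L : ℕ) :
    ∀ (cobj cobj' : ℕ → C) (tw : TriTower L cobj) (tw' : TriTower L cobj'),
      Nonempty (tw.w 0 ≅ tw'.w 0) →
      (∀ i < L, ∀ x : C, inAdd t x → ∀ g : x ⟶ tw.w i,
        ∃ h : x ⟶ cobj (i+1), h ≫ tw.gmor i = g) →
      (∀ i < L, ∀ x : C, inAdd t x → ∀ g : x ⟶ tw'.w i,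
        ∃ h : x ⟶ cobj' (i+1), h ≫ tw'.gmor i = g) →
      (∀ j, 1 ≤ j → j ≤ L + 1 → inAdd t (cobj j)) →
      (∀ j, 1 ≤ j → j ≤ L + 1 → inAdd t (cobj' j)) →
      ∑ i ∈ Finset.range (L+1), ((-1 : ℤ) ^ i) • cls (cobj (i+1)) =
        ∑ i ∈ Finset.range (L+1), ((-1 : ℤ) ^ i) • cls (cobj' (i+1)) := by
  induction L with
  | zero =>
    intro cobj cobj' tw tw' he _ _ mb mb'
    obtain ⟨e⟩ := he
    simp only [zero_add, Finset.sum_range_one, pow_zero, one_smul]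
    exact hcls.1 _ _ (mb 1 le_rfl le_rfl) (mb' 1 le_rfl le_rfl)
      ⟨(eqToIso tw.w_top).symm ≪≫ e ≪≫ eqToIso tw'.w_top⟩
  | succ L IH =>
    intro cobj cobj' tw tw' he pc pc' mb mb'
    obtain ⟨e⟩ := he
    have hT : Triangle.mk (tw.fmor 0) (tw.gmor 0) (tw.hmor 0) ∈ distTriang C :=
      tw.mem 0 (by omega)
    have hU0 : Triangle.mk (tw'.fmor 0) (tw'.gmor 0) (tw'.hmor 0) ∈ distTriang C :=
      tw'.mem 0 (by omega)
    have hU : Triangle.mk (tw'.fmor 0) (tw'.gmor 0 ≫ e.inv) (e.hom ≫ tw'.hmor 0) ∈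
        distTriang C := by
      refine isomorphic_distinguished _ hU0 _ ?_
      exact Triangle.isoMk _ _ (Iso.refl _) (Iso.refl _) e (by simp [Triangle.mk]) (by simp [Triangle.mk]) (by simp [Triangle.mk])
    obtain ⟨p, hp⟩ := pc 0 (by omega) (cobj' 1) (mb' 1 (by omega) (by omega))
      (tw'.gmor 0 ≫ e.inv)
    obtain ⟨q, hq0⟩ := pc' 0 (by omega) (cobj 1) (mb 1 (by omega) (by omega))
      (tw.gmor 0 ≫ e.hom)
    have hq : q ≫ (tw'.gmor 0 ≫ e.inv) = tw.gmor 0 := by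
      rw [← assoc, hq0]; simp
    obtain ⟨E⟩ := schanuel (tw.gmor 0) (tw'.gmor 0 ≫ e.inv) (tw.fmor 0) (tw.hmor 0) hT
      (tw'.fmor 0) (e.hom ≫ tw'.hmor 0) hU p hp q hq
    -- E : tw.w 1 ⊞ cobj' 1 ≅ tw'.w 1 ⊞ cobj 1
    have trivmem : ∀ (s : C), inAdd t s → ∀ j, inAdd t (trivCobj s j) := by
      intro s hs j
      match j with
      | 0 => exact hs
      | 1 => exact hs
      | _+2 => exact inAdd_of_isZero (isZero_zero C)
    have hIH := IH _ _ ((tw.trunc).dsum (trivTower L (cobj' 1)))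
      ((tw'.trunc).dsum (trivTower L (cobj 1)))
      ⟨E⟩
      (dsum_precover _ _
        (fun i hi x hx g => pc (i+1) (by omega) x hx g)
        (fun i _ x _ g => trivTower_precover L (cobj' 1) i x g))
      (dsum_precover _ _
        (fun i hi x hx g => pc' (i+1) (by omega) x hx g)
        (fun i _ x _ g => trivTower_precover L (cobj 1) i x g))
      (by
        intro j hj1 hj2
        exact inAdd_biprod
          (by
            match j, hj1 with
            | j+1, _ => exact mb (j+2) (by omega) (by omega))
          (trivmem _ (mb' 1 (by omega) (by omega)) j))
      (by
        intro j hj1 hj2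
        exact inAdd_biprod
          (by
            match j, hj1 with
            | j+1, _ => exact mb' (j+2) (by omega) (by omega))
          (trivmem _ (mb 1 (by omega) (by omega)) j))
    -- simplify the two sides of hIH
    simp only [truncCobj_succ] at hIH
    have hsplit : ∀ (co : ℕ → C) (s : C), (∀ j, 1 ≤ j → j ≤ L + 2 → inAdd t (co j)) →
        inAdd t s →
        ∑ i ∈ Finset.range (L+1), ((-1 : ℤ) ^ i) • cls (co (i+1+1) ⊞ trivCobj s (i+1)) =
        (∑ i ∈ Finset.range (L+1), ((-1 : ℤ) ^ i) • cls (co (i+1+1))) + cls s := by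
      intro co s mco hs
      have step : ∀ i ∈ Finset.range (L+1), ((-1 : ℤ) ^ i) •
          cls (co (i+1+1) ⊞ trivCobj s (i+1)) =
          ((-1 : ℤ) ^ i) • cls (co (i+1+1)) + ((-1 : ℤ) ^ i) • cls (trivCobj s (i+1)) := by
        intro i hi
        rw [hcls.2 _ _ (mco (i+1+1) (by omega)
          (by have := Finset.mem_range.mp hi; omega)) (trivmem s hs (i+1)), smul_add]
      rw [Finset.sum_congr rfl step, Finset.sum_add_distrib]
      congr 1
      rw [Finset.sum_eq_single 0]
      · simp
      · intro b _ hb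
        match b, hb with
        | b+1, _ => simp [cls_zero hcls]
      · intro h0
        exact absurd (Finset.mem_range.mpr (by omega)) h0
    rw [hsplit cobj (cobj' 1) (fun j a b => mb j a (by omega)) (mb' 1 (by omega) (by omega)),
      hsplit cobj' (cobj 1) (fun j a b => mb' j a (by omega)) (mb 1 (by omega) (by omega))]
      at hIH
    rw [Finset.sum_range_succ' (fun i => ((-1 : ℤ) ^ i) • cls (cobj (i+1))) (L+1),
      Finset.sum_range_succ' (fun i => ((-1 : ℤ) ^ i) • cls (cobj' (i+1))) (L+1)]
    have neg1 : ∀ (co : ℕ → C),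
        ∑ i ∈ Finset.range (L+1), ((-1 : ℤ) ^ (i+1)) • cls (co (i+1+1)) =
        -∑ i ∈ Finset.range (L+1), ((-1 : ℤ) ^ i) • cls (co (i+1+1)) := by
      intro co
      rw [← Finset.sum_neg_distrib]
      exact Finset.sum_congr rfl (fun i _ => by
        rw [pow_succ, mul_smul, neg_one_zsmul, smul_neg])
    rw [neg1 cobj, neg1 cobj']
    simp only [pow_zero, one_smul, Nat.zero_add]
    rw [neg_add_eq_sub, neg_add_eq_sub, sub_eq_sub_iff_add_eq_add]
    rw [add_comm (cls (cobj 1)), ← hIH, add_comm]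

end Towers

end MyTri

end MyAux

variable {C : Type u} [Category.{v} C]

theorem stmt7 (k : Type*) [Field k] [Preadditive C] [CategoryTheory.Linear k C] [HasZeroObject C]
    [HasShift C ℤ] [∀ n : ℤ, (shiftFunctor C n).Additive] [Pretriangulated C]
    [HasFiniteBiproducts C] [IsIdempotentComplete C]
    [∀ X Y : C, FiniteDimensional k (X ⟶ Y)]
    (n : ℕ) (hn : 2 ≤ n) (t : C) (ht : IsClusterTiltingObj n t)
    {G : Type*} [AddCommGroup G] (cls ind : C → G)
    (hcls : IsAddOn {x : C | inAdd t x} cls)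
    (hind : IsIndex n {x : C | inAdd t x} cls ind)
    (c c' : C) : ind (c ⊞ c') = ind c + ind c' := by
  have hL : n - 1 + 1 = n := by omega
  obtain ⟨co1, tw1, h1z, h1cov, h1mem, h1sum⟩ := hind c
  obtain ⟨co2, tw2, h2z, h2cov, h2mem, h2sum⟩ := hind c'
  obtain ⟨co3, tw3, h3z, h3cov, h3mem, h3sum⟩ := hind (c ⊞ c')
  have mem : ∀ (co : ℕ → C) (tw : TriTower (n-1) co), (co n ∈ {x : C | inAdd t x}) →
      (∀ i < n - 1, IsTCover {x : C | inAdd t x} (tw.gmor i)) →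
      ∀ j, 1 ≤ j → j ≤ (n-1) + 1 → inAdd t (co j) := by
    intro co tw hn' hcov j hj1 hj2
    rcases eq_or_lt_of_le hj2 with h | h
    · rw [h, hL]; exact hn'
    · have hj : j - 1 < n - 1 := by omega
      have := (hcov (j-1) hj).1
      rwa [show j - 1 + 1 = j by omega] at this
  have prec : ∀ (co : ℕ → C) (tw : TriTower (n-1) co),
      (∀ i < n - 1, IsTCover {x : C | inAdd t x} (tw.gmor i)) →
      ∀ i < n - 1, ∀ x : C, inAdd t x → ∀ g : x ⟶ tw.w i,
        ∃ h : x ⟶ co (i+1), h ≫ tw.gmor i = g := by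
    intro co tw hcov i hi x hx g
    exact (hcov i hi).2.1 x hx g
  have base : Nonempty ((tw1.dsum tw2).w 0 ≅ tw3.w 0) := by
    refine ⟨eqToIso ?_⟩
    show (tw1.w 0 ⊞ tw2.w 0) = tw3.w 0
    rw [tw1.w_zero, tw2.w_zero, h1z, h2z, tw3.w_zero, h3z]
  have KEY := key_invariance cls hcls (n-1) _ _ (tw1.dsum tw2) tw3 base
    (dsum_precover tw1 tw2 (prec co1 tw1 h1cov) (prec co2 tw2 h2cov))
    (prec co3 tw3 h3cov)
    (fun j a b => inAdd_biprod (mem co1 tw1 h1mem h1cov j a b) (mem co2 tw2 h2mem h2cov j a b))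
    (mem co3 tw3 h3mem h3cov)
  rw [hL] at KEY
  have split : ∀ i ∈ Finset.range n, ((-1 : ℤ) ^ i) • cls (co1 (i+1) ⊞ co2 (i+1)) =
      ((-1 : ℤ) ^ i) • cls (co1 (i+1)) + ((-1 : ℤ) ^ i) • cls (co2 (i+1)) := by
    intro i hi
    have hi' := Finset.mem_range.mp hi
    rw [hcls.2 _ _ (mem co1 tw1 h1mem h1cov (i+1) (by omega) (by omega))
      (mem co2 tw2 h2mem h2cov (i+1) (by omega) (by omega)), smul_add]
  rw [Finset.sum_congr rfl split, Finset.sum_add_distrib] at KEY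
  rw [h1sum, h2sum, h3sum, ← KEY]
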